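/- Let x ∈ ℝ^n and let S ⊆ {1,…,n} with |S| = k, where k ≤ n − k. Enumerate S as i_1, …, i_k with x_{i_1} ≤ x_{i_2} ≤ … ≤ x_{i_k}, and enumerate the k largest-valued elements of the complement of S as j_1, …, j_k with x_{j_1} ≥ x_{j_2} ≥ … ≥ x_{j_k}. Then for every h ∈ {0, 1, …, k}: max { Σ_{i∈S'} x_i : S' ⊆ {1,…,n}, |S'| = k, |S'\S| ≤ h } = Σ_{i∈S} x_i + Σ_{l=1}^{h} max(0, x_{j_l} − x_{i_l}). That is, the Δ-stable top-k optimum is obtained by performing the most beneficial swaps in order, swapping out the lightest current items for the heaviest outside items. -/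

import Mathlib

lemma fin_le_strictMono {t : ℕ} (g : Fin t → ℕ) (hg : StrictMono g) (m : Fin t) : (m : ℕ) ≤ g m := by
  have key : ∀ v : ℕ, ∀ m : Fin t, (m : ℕ) = v → v ≤ g m := by
    intro v
    induction v with
    | zero => intro m _; omega
    | succ v ih =>
      intro m hm
      have hv : v < t := by omega
      have hlt : (⟨v, hv⟩ : Fin t) < m := by simp [Fin.lt_def]; omega
      have h1 := ih ⟨v, hv⟩ rfl
      have h2 := hg hlt
      omega
  exact key _ m rfl

lemma card_filter_lt (k t : ℕ) (htk : t ≤ k) :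
    (Finset.univ.filter (fun l : Fin k => (l : ℕ) < t)).card = t := by
  have : Finset.univ.filter (fun l : Fin k => (l : ℕ) < t)
      = Finset.image (Fin.castLE htk) Finset.univ := by
    ext l
    simp only [Finset.mem_filter, Finset.mem_univ, true_and, Finset.mem_image]
    constructor
    · intro hl; exact ⟨⟨l, hl⟩, by simp [Fin.ext_iff]⟩
    · rintro ⟨m, rfl⟩; exact m.2
  rw [this, Finset.card_image_of_injective _ (Fin.castLE_injective htk)]
  simp

lemma sum_firstk_le {k t : ℕ} (f : Fin k → ℝ) (hf : Monotone f)
    (T : Finset (Fin k)) (hT : T.card = t) :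
    ∑ l ∈ Finset.univ.filter (fun l : Fin k => (l : ℕ) < t), f l ≤ ∑ l ∈ T, f l := by
  have htk : t ≤ k := by
    have := Finset.card_le_univ T
    simpa [hT] using this
  have e := T.orderIsoOfFin hT
  have hrhs : ∑ l ∈ T, f l = ∑ m : Fin t, f (e m) := by
    rw [← Finset.sum_coe_sort T, ← Equiv.sum_comp e.toEquiv (fun a : T => f a)]
    rfl
  have hfilter : Finset.univ.filter (fun l : Fin k => (l : ℕ) < t)
      = Finset.image (Fin.castLE htk) Finset.univ := by
    ext l
    simp only [Finset.mem_filter, Finset.mem_univ, true_and, Finset.mem_image]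
    constructor
    · intro hl; exact ⟨⟨l, hl⟩, by simp [Fin.ext_iff]⟩
    · rintro ⟨m, rfl⟩; exact m.2
  have hlhs : ∑ l ∈ Finset.univ.filter (fun l : Fin k => (l : ℕ) < t), f l
      = ∑ m : Fin t, f (Fin.castLE htk m) := by
    rw [hfilter, Finset.sum_image (fun a _ b _ hab => Fin.castLE_injective htk hab)]
  rw [hlhs, hrhs]
  apply Finset.sum_le_sum
  intro m _
  apply hf
  have hsm : StrictMono (fun m : Fin t => ((e m : Fin k) : ℕ)) := by
    intro a b hab
    exact Fin.val_strictMono (Subtype.coe_lt_coe.mpr (e.strictMono hab))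
  have := fin_le_strictMono _ hsm m
  simpa [Fin.le_def] using this

lemma sum_le_sum_pair {α β : Type*} (s : Finset α) (u : Finset β) (f : α → ℝ) (g : β → ℝ)
    (hcard : s.card = u.card) (hle : ∀ a ∈ s, ∀ b ∈ u, f a ≤ g b) :
    ∑ a ∈ s, f a ≤ ∑ b ∈ u, g b := by
  classical
  have e : {a // a ∈ s} ≃ {b // b ∈ u} := by
    apply Fintype.equivOfCardEq
    simpa using hcard
  rw [← Finset.sum_coe_sort s, ← Finset.sum_coe_sort u,
    ← Equiv.sum_comp e (fun b : u => g b)]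
  exact Finset.sum_le_sum fun a _ => hle a a.2 (e a) (e a).2

lemma sum_outside_le {n k : ℕ} (x : Fin n → ℝ) (S : Finset (Fin n)) (j : Fin k → Fin n)
    (hj_inj : Function.Injective j) (hj_mem : ∀ l, j l ∉ S)
    (hj_anti : Antitone fun l => x (j l))
    (hj_top : ∀ m, m ∉ S → (∀ l, j l ≠ m) → ∀ l, x m ≤ x (j l))
    (A : Finset (Fin n)) (hA : ∀ a ∈ A, a ∉ S) {t : ℕ} (ht : A.card = t) (htk : t ≤ k) :
    ∑ a ∈ A, x a ≤ ∑ l ∈ Finset.univ.filter (fun l : Fin k => (l : ℕ) < t), x (j l) := by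
  classical
  set T : Finset (Fin k) := Finset.univ.filter (fun l : Fin k => j l ∈ A) with hT
  set A₁ : Finset (Fin n) := A.filter (fun a => ∃ l, j l = a) with hA₁
  set A₂ : Finset (Fin n) := A.filter (fun a => ¬∃ l, j l = a) with hA₂
  obtain ⟨t₁, ht₁⟩ : ∃ t₁, T.card = t₁ := ⟨T.card, rfl⟩
  have hA1img : A₁ = T.image j := by
    ext a
    simp only [hA₁, hT, Finset.mem_filter, Finset.mem_image, Finset.mem_univ, true_and]
    constructor
    · rintro ⟨ha, l, rfl⟩; exact ⟨l, ha, rfl⟩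
    · rintro ⟨l, hl, rfl⟩; exact ⟨hl, l, rfl⟩
  have hcardA1 : A₁.card = t₁ := by
    rw [hA1img, Finset.card_image_of_injective _ hj_inj, ht₁]
  have ht1t : t₁ ≤ t := by
    rw [← ht, ← hcardA1]; exact Finset.card_le_card (Finset.filter_subset _ _)
  have hsplitcard : A₁.card + A₂.card = t := by
    rw [hA₁, hA₂, Finset.card_filter_add_card_filter_not, ht]
  have hsumA : ∑ a ∈ A, x a = ∑ a ∈ A₁, x a + ∑ a ∈ A₂, x a := by
    rw [hA₁, hA₂, Finset.sum_filter_add_sum_filter_not]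
  -- split the target filter
  have hff : (Finset.univ.filter (fun l : Fin k => (l : ℕ) < t)).filter
      (fun l : Fin k => (l : ℕ) < t₁) = Finset.univ.filter (fun l : Fin k => (l : ℕ) < t₁) := by
    ext l
    simp only [Finset.mem_filter, Finset.mem_univ, true_and]
    omega
  have hsplit : ∑ l ∈ Finset.univ.filter (fun l : Fin k => (l : ℕ) < t), x (j l)
      = ∑ l ∈ Finset.univ.filter (fun l : Fin k => (l : ℕ) < t₁), x (j l)
        + ∑ l ∈ (Finset.univ.filter (fun l : Fin k => (l : ℕ) < t)).filter
            (fun l : Fin k => ¬ (l : ℕ) < t₁), x (j l) := by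
    rw [← Finset.sum_filter_add_sum_filter_not
      (Finset.univ.filter (fun l : Fin k => (l : ℕ) < t))
      (fun l : Fin k => (l : ℕ) < t₁), hff]
  rw [hsumA, hsplit]
  apply add_le_add
  · -- A₁ part
    have h1 : ∑ a ∈ A₁, x a = ∑ l ∈ T, x (j l) := by
      rw [hA1img, Finset.sum_image (fun a _ b _ hab => hj_inj hab)]
    rw [h1]
    have := sum_firstk_le (fun l => -(x (j l)))
      (fun a b hab => neg_le_neg (hj_anti hab)) T ht₁
    simp only [Finset.sum_neg_distrib] at this
    linarith
  · -- A₂ part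
    apply sum_le_sum_pair
    · have h1 := Finset.card_filter_add_card_filter_not
        (s := Finset.univ.filter (fun l : Fin k => (l : ℕ) < t))
        (p := fun l : Fin k => (l : ℕ) < t₁)
      have h2 : ((Finset.univ.filter (fun l : Fin k => (l : ℕ) < t)).filter
          (fun l : Fin k => (l : ℕ) < t₁)).card = t₁ := by
        rw [hff, card_filter_lt k t₁ (le_trans ht1t htk)]
      have h3 := card_filter_lt k t htk
      omega
    · intro a ha b _
      simp only [hA₂, Finset.mem_filter] at ha
      exact hj_top a (hA a ha.1) (fun l hl => ha.2 ⟨l, hl⟩) b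

/-- **The Δ-stable top-k optimum is obtained by the most beneficial swaps.**
Let `|S| = k ≤ n - k`, let `i` enumerate `S` in nondecreasing order of value, and let
`j` enumerate the `k` largest-valued elements of the complement of `S` in nonincreasing
order of value.  Then for every `h ≤ k`, the maximum of `∑_{m∈S'} x m` over `k`-element
sets `S'` with `|S' \ S| ≤ h` equals
`∑_{m∈S} x m + ∑_{l < h} max 0 (x (j l) - x (i l))`. -/
theorem delta_stable_top_k (n k : ℕ) (x : Fin n → ℝ) (S : Finset (Fin n))
    (hS : S.card = k) (hk : k ≤ n - k) (i j : Fin k → Fin n)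
    (hi_inj : Function.Injective i) (hi_mem : ∀ l, i l ∈ S)
    (hi_mono : Monotone fun l => x (i l))
    (hj_inj : Function.Injective j) (hj_mem : ∀ l, j l ∉ S)
    (hj_anti : Antitone fun l => x (j l))
    (hj_top : ∀ m, m ∉ S → (∀ l, j l ≠ m) → ∀ l, x m ≤ x (j l))
    (h : ℕ) (hh : h ≤ k) :
    IsGreatest
      {v : ℝ | ∃ S' : Finset (Fin n), S'.card = k ∧ (S' \ S).card ≤ h ∧
        v = ∑ m ∈ S', x m}
      (∑ m ∈ S, x m +
        ∑ l ∈ Finset.univ.filter (fun l : Fin k => (l : ℕ) < h),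
          max 0 (x (j l) - x (i l))) := by
    classical
  constructor
  · -- membership: the greedy swap set achieves the value
    set L : Finset (Fin k) :=
      Finset.univ.filter (fun l : Fin k => (l : ℕ) < h ∧ x (i l) < x (j l)) with hLdef
    have hLsub : L ⊆ Finset.univ.filter (fun l : Fin k => (l : ℕ) < h) := by
      intro l hl
      simp only [hLdef, Finset.mem_filter, Finset.mem_univ, true_and] at hl ⊢
      exact hl.1
    have hLcard : L.card ≤ h := by
      calc L.card ≤ (Finset.univ.filter (fun l : Fin k => (l : ℕ) < h)).card :=
            Finset.card_le_card hLsub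
        _ = h := card_filter_lt k h hh
    have him : L.image i ⊆ S := by
      intro a ha
      obtain ⟨l, _, rfl⟩ := Finset.mem_image.mp ha
      exact hi_mem l
    have hjS : ∀ a ∈ L.image j, a ∉ S := by
      intro a ha
      obtain ⟨l, _, rfl⟩ := Finset.mem_image.mp ha
      exact hj_mem l
    have hdisj : Disjoint (S \ L.image i) (L.image j) := by
      rw [Finset.disjoint_right]
      intro a ha
      simp only [Finset.mem_sdiff]
      intro hc
      exact hjS a ha hc.1
    have hcard_iL : (L.image i).card = L.card := Finset.card_image_of_injective _ hi_inj
    have hcard_jL : (L.image j).card = L.card := Finset.card_image_of_injective _ hj_inj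
    have hiLk : (L.image i).card ≤ k := by
      have := Finset.card_le_card him; omega
    refine ⟨(S \ L.image i) ∪ L.image j, ?_, ?_, ?_⟩
    · rw [Finset.card_union_of_disjoint hdisj, Finset.card_sdiff_of_subset him, hS, hcard_iL, hcard_jL]
      omega
    · have hSS : ((S \ L.image i) ∪ L.image j) \ S = L.image j := by
        ext a
        simp only [Finset.mem_sdiff, Finset.mem_union]
        constructor
        · rintro ⟨hc | hc, hns⟩
          · exact absurd hc.1 hns
          · exact hc
        · intro ha
          exact ⟨Or.inr ha, hjS a ha⟩
      rw [hSS, hcard_jL]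
      exact hLcard
    · rw [Finset.sum_union hdisj, Finset.sum_sdiff_eq_sub him,
        Finset.sum_image (fun a _ b _ hab => hi_inj hab),
        Finset.sum_image (fun a _ b _ hab => hj_inj hab)]
      have hmax : ∑ l ∈ Finset.univ.filter (fun l : Fin k => (l : ℕ) < h),
          max 0 (x (j l) - x (i l)) = ∑ l ∈ L, (x (j l) - x (i l)) := by
        rw [← Finset.sum_subset hLsub (fun l hl hnl => ?_)]
        · apply Finset.sum_congr rfl
          intro l hl
          simp only [hLdef, Finset.mem_filter, Finset.mem_univ, true_and] at hl
          rw [max_eq_right (by linarith [hl.2])]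
        · simp only [hLdef, Finset.mem_filter, Finset.mem_univ, true_and] at hl hnl
          push_neg at hnl
          rw [max_eq_left (by linarith [hnl hl])]
      rw [hmax, Finset.sum_sub_distrib]
      ring
  · -- upper bound
    rintro v ⟨S', hS', hdel, rfl⟩
    obtain ⟨t, htdef⟩ : ∃ t, (S' \ S).card = t := ⟨_, rfl⟩
    have hth : t ≤ h := htdef ▸ hdel
    have htk : t ≤ k := le_trans hth hh
    have hBcard : (S \ S').card = t := by
      have h1 := Finset.card_sdiff_add_card_inter S' S
      have h2 := Finset.card_sdiff_add_card_inter S S'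
      rw [Finset.inter_comm] at h2
      omega
    -- S = image of i
    have hSimg : Finset.univ.image i = S := by
      apply Finset.eq_of_subset_of_card_le
      · intro a ha
        obtain ⟨l, _, rfl⟩ := Finset.mem_image.mp ha
        exact hi_mem l
      · rw [Finset.card_image_of_injective _ hi_inj, hS]
        simp
    -- the discarded set B, realized through i
    set TB : Finset (Fin k) := Finset.univ.filter (fun l : Fin k => i l ∈ S \ S') with hTB
    have hTBimg : TB.image i = S \ S' := by
      ext a
      simp only [hTB, Finset.mem_image, Finset.mem_filter, Finset.mem_univ, true_and]
      constructor
      · rintro ⟨l, hl, rfl⟩; exact hl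
      · intro ha
        have : a ∈ Finset.univ.image i := hSimg.symm ▸ (Finset.mem_sdiff.mp ha).1
        obtain ⟨l, _, rfl⟩ := Finset.mem_image.mp this
        exact ⟨l, ha, rfl⟩
    have hTBcard : TB.card = t := by
      rw [← hBcard, ← hTBimg, Finset.card_image_of_injective _ hi_inj]
    have hBsum : ∑ a ∈ S \ S', x a = ∑ l ∈ TB, x (i l) := by
      rw [← hTBimg, Finset.sum_image (fun a _ b _ hab => hi_inj hab)]
    -- lower bound for the discarded sum
    have hBlow : ∑ l ∈ Finset.univ.filter (fun l : Fin k => (l : ℕ) < t), x (i l)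
        ≤ ∑ a ∈ S \ S', x a := by
      rw [hBsum]
      exact sum_firstk_le _ hi_mono TB hTBcard
    -- upper bound for the added sum
    have hAup : ∑ a ∈ S' \ S, x a
        ≤ ∑ l ∈ Finset.univ.filter (fun l : Fin k => (l : ℕ) < t), x (j l) :=
      sum_outside_le x S j hj_inj hj_mem hj_anti hj_top (S' \ S)
        (fun a ha => (Finset.mem_sdiff.mp ha).2) htdef htk
    -- decompositions
    have e1 : ∑ m ∈ S', x m = ∑ m ∈ S' ∩ S, x m + ∑ m ∈ S' \ S, x m := by
      rw [← Finset.filter_mem_eq_inter, Finset.sdiff_eq_filter,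
        Finset.sum_filter_add_sum_filter_not]
    have e2 : ∑ m ∈ S, x m = ∑ m ∈ S' ∩ S, x m + ∑ m ∈ S \ S', x m := by
      rw [Finset.inter_comm, ← Finset.filter_mem_eq_inter, Finset.sdiff_eq_filter,
        Finset.sum_filter_add_sum_filter_not]
    -- compare swap gains with the maxima
    have hsub : Finset.univ.filter (fun l : Fin k => (l : ℕ) < t)
        ⊆ Finset.univ.filter (fun l : Fin k => (l : ℕ) < h) := by
      intro l hl
      simp only [Finset.mem_filter, Finset.mem_univ, true_and] at hl ⊢
      omega
    have hmax1 : ∑ l ∈ Finset.univ.filter (fun l : Fin k => (l : ℕ) < t),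
          (x (j l) - x (i l))
        ≤ ∑ l ∈ Finset.univ.filter (fun l : Fin k => (l : ℕ) < t),
          max 0 (x (j l) - x (i l)) :=
      Finset.sum_le_sum fun l _ => le_max_right _ _
    have hmax2 : ∑ l ∈ Finset.univ.filter (fun l : Fin k => (l : ℕ) < t),
          max 0 (x (j l) - x (i l))
        ≤ ∑ l ∈ Finset.univ.filter (fun l : Fin k => (l : ℕ) < h),
          max 0 (x (j l) - x (i l)) :=
      Finset.sum_le_sum_of_subset_of_nonneg hsub fun l _ _ => le_max_left _ _
    have hsplit : ∑ l ∈ Finset.univ.filter (fun l : Fin k => (l : ℕ) < t),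
          (x (j l) - x (i l))
        = ∑ l ∈ Finset.univ.filter (fun l : Fin k => (l : ℕ) < t), x (j l)
          - ∑ l ∈ Finset.univ.filter (fun l : Fin k => (l : ℕ) < t), x (i l) :=
      Finset.sum_sub_distrib _ _
    linarith
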